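/- Let d ≥ 2, 2 ≤ α ≤ 4, and -d + 3 < β < -d + 4 with β ≥ β_*(α) := (-10+3α+7d-αd-d²)/(d+α-3). Then (α/2 - 1)·((d+β-3)(d+α-4))/((d+α-3)(d+β-4)) - (β/2 - 1) ≤ 0. -/
import Mathlib


open Real Set MeasureTheory

/-- Pochhammer symbol (rising factorial) for a real argument. -/
noncomputable def poch (x : ℝ) (n : ℕ) : ℝ := ∏ i ∈ Finset.range n, (x + i)

/-- Gauss hypergeometric series. -/
noncomputable def hyperF (a b c z : ℝ) : ℝ :=
  ∑' n : ℕ, poch a n * poch b n / (poch c n * (n.factorial : ℝ)) * z ^ n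

theorem psi_second_deriv_sign (d : ℕ) (hd : 2 ≤ d) (α β : ℝ) (hα₂ : 2 ≤ α) (hα₄ : α ≤ 4)
    (hβl : -(d : ℝ) + 3 < β) (hβu : β < -(d : ℝ) + 4)
    (hβs : (-10 + 3 * α + 7 * (d : ℝ) - α * (d : ℝ) - (d : ℝ) ^ 2) / ((d : ℝ) + α - 3) ≤ β) :
    (α / 2 - 1) * (((d : ℝ) + β - 3) * ((d : ℝ) + α - 4)) /
        (((d : ℝ) + α - 3) * ((d : ℝ) + β - 4)) - (β / 2 - 1) ≤ 0 := by
  have hd2 : (2:ℝ) ≤ d := by exact_mod_cast hd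
  have hA : (0:ℝ) < (d : ℝ) + α - 3 := by linarith
  have hC : (d : ℝ) + β - 4 < 0 := by linarith
  have hden : ((d : ℝ) + α - 3) * ((d : ℝ) + β - 4) < 0 := mul_neg_of_pos_of_neg hA hC
  have hβs' : (-10 + 3 * α + 7 * (d : ℝ) - α * (d : ℝ) - (d : ℝ) ^ 2) ≤ β * ((d : ℝ) + α - 3) :=
    (div_le_iff₀ hA).mp hβs
  rw [sub_nonpos, div_le_iff_of_neg hden]
  nlinarith [mul_nonneg (by linarith : (0:ℝ) ≤ α - β)
    (by linarith : (0:ℝ) ≤ β * ((d : ℝ) + α - 3) - (-10 + 3 * α + 7 * (d : ℝ) - α * (d : ℝ) - (d : ℝ) ^ 2))]
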